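/- Let n ≥ 1 and let A₁, …, Aₙ be 2×2 Hermitian complex matrices with zero trace such that A(p) := p₁A₁ + ⋯ + pₙAₙ is invertible for every p ∈ ℝⁿ \ {0}. Then the function q(p) := −det A(p) is a real-valued quadratic form in p (i.e. there is a real symmetric n×n matrix G = (g^{αβ}) with q(p) = Σ_{α,β} g^{αβ} p_α p_β), and this quadratic form is positive definite. -/

import Mathlib

open Matrix

/-- For an elliptic family of trace-free Hermitian `2×2` matrices
`A₁, …, Aₙ`, the function `q(p) = -det A(p)` is a real quadratic form in `p`, and this
quadratic form is positive definite. -/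
theorem neg_det_is_positive_definite_quadratic_form
    {n : ℕ} (hn : 1 ≤ n) (A : Fin n → Matrix (Fin 2) (Fin 2) ℂ)
    (hHerm : ∀ α, (A α).IsHermitian) (hTr : ∀ α, (A α).trace = 0)
    (hell : ∀ p : Fin n → ℝ, p ≠ 0 → IsUnit (∑ α, (p α : ℂ) • A α)) :
    ∃ G : Matrix (Fin n) (Fin n) ℝ, G.IsSymm ∧
      (∀ p : Fin n → ℝ,
        -(∑ α, (p α : ℂ) • A α).det = ((∑ α, ∑ β, G α β * p α * p β : ℝ) : ℂ)) ∧
      (∀ p : Fin n → ℝ, p ≠ 0 → 0 < ∑ α, ∑ β, G α β * p α * p β) := by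
  classical
  set a : Fin n → ℝ := fun α => (A α 0 0).re with ha
  set b : Fin n → ℂ := fun α => A α 0 1 with hb
  have h00 : ∀ α, A α 0 0 = (a α : ℂ) := by
    intro α
    exact ((hHerm α).coe_re_apply_self 0).symm
  have h11 : ∀ α, A α 1 1 = -(a α : ℂ) := by
    intro α
    have := hTr α
    rw [Matrix.trace_fin_two] at this
    rw [← h00 α]; linear_combination this
  have h10 : ∀ α, A α 1 0 = (starRingEnd ℂ) (b α) := by
    intro α
    simpa [hb] using ((hHerm α).apply 1 0).symm
  set G : Matrix (Fin n) (Fin n) ℝ :=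
    fun α β => a α * a β + (b α * (starRingEnd ℂ) (b β)).re with hG
  have hGsymm : G.IsSymm := by
    ext α β
    rw [Matrix.transpose_apply]; simp only [hG]
    have : (b β * (starRingEnd ℂ) (b α)).re = (b α * (starRingEnd ℂ) (b β)).re := by
      rw [← Complex.conj_re (b β * (starRingEnd ℂ) (b α))]
      simp [mul_comm]
    rw [this, mul_comm (a β)]
  have key : ∀ p : Fin n → ℝ, (∑ α, ∑ β, G α β * p α * p β) =
      (∑ α, p α * a α) ^ 2 + Complex.normSq (∑ α, (p α : ℂ) * b α) := by
    intro p
    have hsq : (∑ α, p α * a α) ^ 2 = ∑ α, ∑ β, (a α * a β) * p α * p β := by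
      rw [sq, Finset.sum_mul_sum]
      apply Finset.sum_congr rfl; intro α _
      apply Finset.sum_congr rfl; intro β _; ring
    have hns : Complex.normSq (∑ α, (p α : ℂ) * b α) =
        ∑ α, ∑ β, (b α * (starRingEnd ℂ) (b β)).re * p α * p β := by
      have hre : Complex.normSq (∑ α, (p α : ℂ) * b α) =
          ((∑ α, (p α : ℂ) * b α) * (starRingEnd ℂ) (∑ α, (p α : ℂ) * b α)).re := by
        rw [Complex.mul_conj]; simp
      rw [hre]
      rw [map_sum (starRingEnd ℂ), Finset.sum_mul_sum, Complex.re_sum]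
      apply Finset.sum_congr rfl; intro α _
      rw [Complex.re_sum]
      apply Finset.sum_congr rfl; intro β _
      rw [_root_.map_mul, Complex.conj_ofReal]
      have : (p α : ℂ) * b α * ((p β : ℂ) * (starRingEnd ℂ) (b β)) =
          (b α * (starRingEnd ℂ) (b β)) * ((p α : ℝ) * (p β : ℝ) : ℝ) := by
        push_cast; ring
      rw [this, Complex.mul_re]
      simp [mul_assoc]
    rw [hsq, hns, ← Finset.sum_add_distrib]
    apply Finset.sum_congr rfl; intro α _
    rw [← Finset.sum_add_distrib]
    apply Finset.sum_congr rfl; intro β _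
    simp only [hG]; ring
  have hdet : ∀ p : Fin n → ℝ, -(∑ α, (p α : ℂ) • A α).det =
      ((∑ α, p α * a α : ℝ) : ℂ) ^ 2 +
        (∑ α, (p α : ℂ) * b α) * (starRingEnd ℂ) (∑ α, (p α : ℂ) * b α) := by
    intro p
    have hM : ∀ i j, (∑ α, (p α : ℂ) • A α) i j = ∑ α, (p α : ℂ) * A α i j := by
      intro i j; simp [Matrix.sum_apply]
    rw [Matrix.det_fin_two, hM, hM, hM, hM]
    have e00 : (∑ α, (p α : ℂ) * A α 0 0) = ((∑ α, p α * a α : ℝ) : ℂ) := by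
      push_cast
      exact Finset.sum_congr rfl fun α _ => by rw [h00 α]
    have e11 : (∑ α, (p α : ℂ) * A α 1 1) = -((∑ α, p α * a α : ℝ) : ℂ) := by
      push_cast [Finset.sum_neg_distrib]
      rw [← Finset.sum_neg_distrib]
      exact Finset.sum_congr rfl fun α _ => by rw [h11 α]; ring
    have e10 : (∑ α, (p α : ℂ) * A α 1 0) = (starRingEnd ℂ) (∑ α, (p α : ℂ) * b α) := by
      rw [map_sum]
      exact Finset.sum_congr rfl fun α _ => by
        rw [h10 α]; simp [Complex.conj_ofReal]
    rw [e00, e11, e10]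
    ring
  refine ⟨G, hGsymm, ?_, ?_⟩
  · intro p
    rw [hdet p, key p, Complex.mul_conj]
    push_cast
    ring
  · intro p hp
    rw [key p]
    have hnz : ((∑ α, p α * a α) ^ 2 + Complex.normSq (∑ α, (p α : ℂ) * b α)) ≠ 0 := by
      intro h0
      have hdet0 : (∑ α, (p α : ℂ) • A α).det = 0 := by
        have := hdet p
        rw [Complex.mul_conj] at this
        have : -(∑ α, (p α : ℂ) • A α).det =
            (((∑ α, p α * a α) ^ 2 + Complex.normSq (∑ α, (p α : ℂ) * b α) : ℝ) : ℂ) := by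
          rw [this]; push_cast; ring
        rw [h0] at this
        simpa using this
      have := (Matrix.isUnit_iff_isUnit_det _).mp (hell p hp)
      rw [hdet0] at this
      simp at this
    have hge : 0 ≤ (∑ α, p α * a α) ^ 2 + Complex.normSq (∑ α, (p α : ℂ) * b α) :=
      add_nonneg (sq_nonneg _) (Complex.normSq_nonneg _)
    exact lt_of_le_of_ne hge (Ne.symm hnz)
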